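/- Let 2π/3 < θ < π, let r₁, r₂ > 0, and set a := (r₁, 0) and b := r₂·(cos(3θ/2), sin(3θ/2)). Then for every ε > 0 there exists a continuous curve γ : [0,1] → ℝ² with image contained in S_{2θ}, γ(0) = a, γ(1) = b, and eVariationOn γ [0,1] < ‖a‖ + ‖b‖ + ε. Hence the infimum of lengths of curves from a to b inside the punctured double sector S_{2θ} equals ‖a‖ + ‖b‖ (and, combined with the strict lower bound, this infimum is not attained). -/

import Mathlib

open Real Set
open scoped ENNReal NNReal

/-- The closed planar sector of angle `θ` (in Euclidean `ℝ²`) with the apex removed. -/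
def punctSectorE (θ : ℝ) : Set (EuclideanSpace ℝ (Fin 2)) :=
  {p | ∃ r : ℝ, 0 < r ∧ ∃ φ : ℝ, 0 ≤ φ ∧ φ ≤ θ ∧
    p = (WithLp.equiv 2 (Fin 2 → ℝ)).symm ![r * Real.cos φ, r * Real.sin φ]}

noncomputable def myPt (x y : ℝ) : EuclideanSpace ℝ (Fin 2) :=
  (WithLp.equiv 2 (Fin 2 → ℝ)).symm ![x, y]

lemma myPt_dist (x y x' y' : ℝ) :
    dist (myPt x y) (myPt x' y') = Real.sqrt ((x - x')^2 + (y - y')^2) := by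
  rw [EuclideanSpace.dist_eq]
  simp [myPt, Fin.sum_univ_two, Real.dist_eq, sq_abs]

lemma abs_sin_le_abs' (x : ℝ) : |Real.sin x| ≤ |x| := by
  rcases eq_or_ne x 0 with rfl | hx
  · simp
  · exact (Real.abs_sin_lt_abs hx).le

lemma chord_sq_le (φ φ' : ℝ) :
    (Real.cos φ - Real.cos φ')^2 + (Real.sin φ - Real.sin φ')^2 ≤ (φ - φ')^2 := by
  have h1 : (Real.cos φ - Real.cos φ')^2 + (Real.sin φ - Real.sin φ')^2
      = 2 - 2 * Real.cos (φ - φ') := by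
    rw [Real.cos_sub]
    nlinarith [Real.sin_sq_add_cos_sq φ, Real.sin_sq_add_cos_sq φ']
  have h2 : Real.sin ((φ - φ')/2)^2 = 1/2 - Real.cos (φ - φ')/2 := by
    rw [Real.sin_sq_eq_half_sub]; ring_nf
  have h3 : |Real.sin ((φ - φ')/2)| ≤ |(φ - φ')/2| := abs_sin_le_abs' _
  have h4 : Real.sin ((φ - φ')/2)^2 ≤ ((φ - φ')/2)^2 := by
    rw [← sq_abs, ← sq_abs ((φ - φ')/2)]
    exact pow_le_pow_left₀ (abs_nonneg _) h3 2
  nlinarith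

lemma polar_dist_radial (r r' φ : ℝ) :
    dist (myPt (r * Real.cos φ) (r * Real.sin φ)) (myPt (r' * Real.cos φ) (r' * Real.sin φ))
      = |r - r'| := by
  rw [myPt_dist]
  have h : (r * Real.cos φ - r' * Real.cos φ)^2 + (r * Real.sin φ - r' * Real.sin φ)^2
      = (r - r')^2 := by
    linear_combination ((r - r')^2) * (Real.sin_sq_add_cos_sq φ)
  rw [h, Real.sqrt_sq_eq_abs]

lemma polar_dist_angular {r : ℝ} (hr : 0 ≤ r) (φ φ' : ℝ) :
    dist (myPt (r * Real.cos φ) (r * Real.sin φ)) (myPt (r * Real.cos φ') (r * Real.sin φ'))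
      ≤ r * |φ - φ'| := by
  rw [myPt_dist]
  have h1 : (r * Real.cos φ - r * Real.cos φ')^2 + (r * Real.sin φ - r * Real.sin φ')^2
      ≤ (r * |φ - φ'|)^2 := by
    have := chord_sq_le φ φ'
    have h2 : (r * |φ - φ'|)^2 = r^2 * (φ - φ')^2 := by rw [mul_pow, sq_abs]
    nlinarith [sq_nonneg r]
  calc Real.sqrt ((r * Real.cos φ - r * Real.cos φ')^2 + (r * Real.sin φ - r * Real.sin φ')^2)
      ≤ Real.sqrt ((r * |φ - φ'|)^2) := Real.sqrt_le_sqrt h1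
    _ = r * |φ - φ'| := Real.sqrt_sq (by positivity)

noncomputable def myRho (r₁ r₂ δ t : ℝ) : ℝ :=
  δ + (r₁ - δ) * max 0 (1 - 3*t) + (r₂ - δ) * max 0 (3*t - 2)

noncomputable def myPhi (θ t : ℝ) : ℝ := (3 * θ / 2) * max 0 (min 1 (3*t - 1))

noncomputable def myCurve (θ r₁ r₂ δ : ℝ) (t : ℝ) : EuclideanSpace ℝ (Fin 2) :=
  myPt (myRho r₁ r₂ δ t * Real.cos (myPhi θ t)) (myRho r₁ r₂ δ t * Real.sin (myPhi θ t))

lemma myCurve_continuous (θ r₁ r₂ δ : ℝ) : Continuous (myCurve θ r₁ r₂ δ) := by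
  have hρ : Continuous (myRho r₁ r₂ δ) := by
    unfold myRho; fun_prop
  have hφ : Continuous (myPhi θ) := by
    unfold myPhi; fun_prop
  have hx : Continuous fun t => myRho r₁ r₂ δ t * Real.cos (myPhi θ t) := by fun_prop
  have hy : Continuous fun t => myRho r₁ r₂ δ t * Real.sin (myPhi θ t) := by fun_prop
  have hv : Continuous fun t => (![myRho r₁ r₂ δ t * Real.cos (myPhi θ t),
      myRho r₁ r₂ δ t * Real.sin (myPhi θ t)] : Fin 2 → ℝ) := by
    apply continuous_pi
    intro i
    fin_cases i <;> simpa
  exact (PiLp.continuous_toLp 2 (fun _ : Fin 2 => ℝ)).comp hv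

lemma myRho_pos {r₁ r₂ δ : ℝ} (hδ : 0 < δ) (h1 : δ ≤ r₁) (h2 : δ ≤ r₂) (t : ℝ) :
    0 < myRho r₁ r₂ δ t := by
  have a1 : 0 ≤ (r₁ - δ) * max 0 (1 - 3*t) := mul_nonneg (by linarith) (le_max_left _ _)
  have a2 : 0 ≤ (r₂ - δ) * max 0 (3*t - 2) := mul_nonneg (by linarith) (le_max_left _ _)
  unfold myRho; linarith

lemma myPhi_mem {θ : ℝ} (hθ : 0 ≤ θ) (t : ℝ) : 0 ≤ myPhi θ t ∧ myPhi θ t ≤ 2 * θ := by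
  have h0 : (0:ℝ) ≤ max 0 (min 1 (3*t - 1)) := le_max_left _ _
  have h1 : max 0 (min 1 (3*t - 1)) ≤ 1 := max_le zero_le_one ((min_le_left _ _))
  constructor
  · exact mul_nonneg (by linarith) h0
  · unfold myPhi; nlinarith

lemma myCurve_zero {θ r₁ r₂ δ : ℝ} : myCurve θ r₁ r₂ δ 0 = myPt r₁ 0 := by
  unfold myCurve myRho myPhi
  norm_num

lemma myCurve_one {θ r₁ r₂ δ : ℝ} :
    myCurve θ r₁ r₂ δ 1 = myPt (r₂ * Real.cos (3 * θ / 2)) (r₂ * Real.sin (3 * θ / 2)) := by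
  unfold myCurve myRho myPhi
  norm_num

lemma evar_le_of_lip {E : Type*} [PseudoEMetricSpace E] {f : ℝ → E} {u v : ℝ} {C : ℝ≥0}
    (huv : u ≤ v) (h : LipschitzOnWith C f (Set.Icc u v)) :
    eVariationOn f (Set.Icc u v) ≤ ENNReal.ofReal (C * (v - u)) := by
  have h1 : eVariationOn (f ∘ id) (Set.Icc u v) ≤ C * eVariationOn id (Set.Icc u v) :=
    h.comp_eVariationOn_le (Set.mapsTo_id _)
  have h2 : eVariationOn (id : ℝ → ℝ) (Set.Icc u v) ≤ ENNReal.ofReal (v - u) := by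
    have := (monotoneOn_id (s := Set.Icc u v)).eVariationOn_le
      (Set.left_mem_Icc.2 huv) (Set.right_mem_Icc.2 huv)
    simpa [Set.inter_eq_self_of_subset_left, Set.Icc_inter_Icc] using this
  calc eVariationOn f (Set.Icc u v) = eVariationOn (f ∘ id) (Set.Icc u v) := rfl
    _ ≤ C * eVariationOn id (Set.Icc u v) := h1
    _ ≤ C * ENNReal.ofReal (v - u) := mul_le_mul_right h2 _
    _ = ENNReal.ofReal (C * (v - u)) := by
        rw [ENNReal.ofReal_mul (by positivity)]
        simp

lemma evar_split {E : Type*} [PseudoEMetricSpace E] (f : ℝ → E) {a b c : ℝ}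
    (hab : a ≤ b) (hbc : b ≤ c) :
    eVariationOn f (Set.Icc a c)
      = eVariationOn f (Set.Icc a b) + eVariationOn f (Set.Icc b c) := by
  have := eVariationOn.Icc_add_Icc f (s := Set.univ) hab hbc (Set.mem_univ b)
  simpa using this.symm

lemma piece1_var {θ r₁ r₂ δ : ℝ} (hδr₁ : δ ≤ r₁) :
    eVariationOn (myCurve θ r₁ r₂ δ) (Set.Icc 0 (1/3)) ≤ ENNReal.ofReal (r₁ - δ) := by
  have hlip : LipschitzOnWith (Real.toNNReal (3 * (r₁ - δ))) (myCurve θ r₁ r₂ δ)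
      (Set.Icc 0 (1/3)) := by
    apply LipschitzOnWith.of_dist_le_mul
    intro x hx y hy
    obtain ⟨hx0, hx1⟩ := hx
    obtain ⟨hy0, hy1⟩ := hy
    have hφx : myPhi θ x = 0 := by
      unfold myPhi
      rw [max_eq_left (by rw [min_le_iff]; right; linarith), mul_zero]
    have hφy : myPhi θ y = 0 := by
      unfold myPhi
      rw [max_eq_left (by rw [min_le_iff]; right; linarith), mul_zero]
    have hρ : ∀ t : ℝ, 0 ≤ t → t ≤ 1/3 → myRho r₁ r₂ δ t = δ + (r₁ - δ) * (1 - 3*t) := by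
      intro t ht0 ht1
      unfold myRho
      rw [max_eq_right (by linarith), max_eq_left (by linarith), mul_zero, add_zero]
    unfold myCurve
    rw [hφx, hφy, polar_dist_radial, hρ x hx0 hx1, hρ y hy0 hy1,
      Real.coe_toNNReal _ (by nlinarith), Real.dist_eq]
    have : δ + (r₁ - δ) * (1 - 3*x) - (δ + (r₁ - δ) * (1 - 3*y)) = 3*(r₁-δ) * (y - x) := by ring
    rw [this, abs_mul, abs_of_nonneg (by linarith : (0:ℝ) ≤ 3*(r₁-δ)), abs_sub_comm]
  have := evar_le_of_lip (by norm_num : (0:ℝ) ≤ 1/3) hlip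
  refine this.trans (le_of_eq ?_)
  congr 1
  rw [Real.coe_toNNReal _ (by nlinarith)]
  ring

lemma piece3_var {θ r₁ r₂ δ : ℝ} (hδr₂ : δ ≤ r₂) :
    eVariationOn (myCurve θ r₁ r₂ δ) (Set.Icc (2/3) 1) ≤ ENNReal.ofReal (r₂ - δ) := by
  have hlip : LipschitzOnWith (Real.toNNReal (3 * (r₂ - δ))) (myCurve θ r₁ r₂ δ)
      (Set.Icc (2/3) 1) := by
    apply LipschitzOnWith.of_dist_le_mul
    intro x hx y hy
    obtain ⟨hx0, hx1⟩ := hx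
    obtain ⟨hy0, hy1⟩ := hy
    have hφ : ∀ t : ℝ, 2/3 ≤ t → myPhi θ t = 3 * θ / 2 := by
      intro t ht
      unfold myPhi
      rw [min_eq_left (by linarith), max_eq_right zero_le_one, mul_one]
    have hρ : ∀ t : ℝ, 2/3 ≤ t → t ≤ 1 → myRho r₁ r₂ δ t = δ + (r₂ - δ) * (3*t - 2) := by
      intro t ht0 ht1
      unfold myRho
      rw [max_eq_left (by linarith), max_eq_right (by linarith), mul_zero, add_zero]
    unfold myCurve
    rw [hφ x hx0, hφ y hy0, polar_dist_radial, hρ x hx0 hx1, hρ y hy0 hy1,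
      Real.coe_toNNReal _ (by nlinarith), Real.dist_eq]
    have : δ + (r₂ - δ) * (3*x - 2) - (δ + (r₂ - δ) * (3*y - 2)) = 3*(r₂-δ) * (x - y) := by ring
    rw [this, abs_mul, abs_of_nonneg (by linarith : (0:ℝ) ≤ 3*(r₂-δ))]
  have := evar_le_of_lip (by norm_num : (2:ℝ)/3 ≤ 1) hlip
  refine this.trans (le_of_eq ?_)
  congr 1
  rw [Real.coe_toNNReal _ (by nlinarith)]
  ring

lemma piece2_var {θ r₁ r₂ δ : ℝ} (hδ : 0 ≤ δ) (hθ : 0 ≤ θ) :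
    eVariationOn (myCurve θ r₁ r₂ δ) (Set.Icc (1/3) (2/3))
      ≤ ENNReal.ofReal (δ * (3 * θ / 2)) := by
  have hlip : LipschitzOnWith (Real.toNNReal (δ * (9 * θ / 2))) (myCurve θ r₁ r₂ δ)
      (Set.Icc (1/3) (2/3)) := by
    apply LipschitzOnWith.of_dist_le_mul
    intro x hx y hy
    obtain ⟨hx0, hx1⟩ := hx
    obtain ⟨hy0, hy1⟩ := hy
    have hρ : ∀ t : ℝ, 1/3 ≤ t → t ≤ 2/3 → myRho r₁ r₂ δ t = δ := by
      intro t ht0 ht1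
      unfold myRho
      rw [max_eq_left (by linarith), max_eq_left (by linarith)]
      ring
    have hφ : ∀ t : ℝ, 1/3 ≤ t → t ≤ 2/3 → myPhi θ t = (3 * θ / 2) * (3*t - 1) := by
      intro t ht0 ht1
      unfold myPhi
      rw [min_eq_right (by linarith), max_eq_right (by linarith)]
    unfold myCurve
    rw [hρ x hx0 hx1, hρ y hy0 hy1, Real.coe_toNNReal _ (by positivity), Real.dist_eq]
    calc dist (myPt (δ * Real.cos (myPhi θ x)) (δ * Real.sin (myPhi θ x)))
          (myPt (δ * Real.cos (myPhi θ y)) (δ * Real.sin (myPhi θ y)))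
        ≤ δ * |myPhi θ x - myPhi θ y| := polar_dist_angular hδ _ _
      _ = δ * (9 * θ / 2) * |x - y| := by
          rw [hφ x hx0 hx1, hφ y hy0 hy1]
          have : (3 * θ / 2) * (3*x - 1) - (3 * θ / 2) * (3*y - 1) = (9 * θ / 2) * (x - y) := by
            ring
          rw [this, abs_mul, abs_of_nonneg (by positivity : (0:ℝ) ≤ 9 * θ / 2), mul_assoc]
  have := evar_le_of_lip (by norm_num : (1:ℝ)/3 ≤ 2/3) hlip
  refine this.trans (le_of_eq ?_)
  congr 1
  rw [Real.coe_toNNReal _ (by positivity)]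
  ring_nf

lemma polar_to_exp (r φ : ℝ) :
    (↑(r * Real.cos φ) + ↑(r * Real.sin φ) * Complex.I) =
      (r : ℂ) * Complex.exp ((φ : ℂ) * Complex.I) := by
  rw [Complex.exp_mul_I, ← Complex.ofReal_cos, ← Complex.ofReal_sin]
  push_cast
  ring

lemma exp_arg_slit {r ψ : ℝ} (hr : 0 < r) (h1 : -π < ψ) (h2 : ψ < π) :
    Complex.arg ((r:ℂ) * Complex.exp ((ψ:ℂ) * Complex.I)) = ψ ∧
    (r:ℂ) * Complex.exp ((ψ:ℂ) * Complex.I) ∈ Complex.slitPlane := by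
  rw [Complex.exp_mul_I]
  constructor
  · rw [Complex.arg_real_mul _ hr]
    exact Complex.arg_cos_add_sin_mul_I ⟨h1, h2.le⟩
  · rw [Complex.mem_slitPlane_iff]
    simp only [Complex.mul_re, Complex.mul_im, Complex.ofReal_re, Complex.ofReal_im,
      Complex.add_re, Complex.add_im, Complex.mul_re, Complex.mul_im,
      Complex.cos_ofReal_re, Complex.cos_ofReal_im, Complex.sin_ofReal_re, Complex.sin_ofReal_im,
      Complex.I_re, Complex.I_im]
    ring_nf
    rcases eq_or_ne (Real.sin ψ) 0 with hs | hs
    · left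
      have hψ : ψ = 0 := (Real.sin_eq_zero_iff_of_lt_of_lt h1 h2).1 hs
      simp [hψ, hr]
    · right
      simp [hs, hr.ne']

lemma sector_lower_bound {θ r₁ r₂ : ℝ} (hθ₁ : 2 * π / 3 < θ) (hθ₂ : θ < π)
    (hr₁ : 0 < r₁) (hr₂ : 0 < r₂) {γ : ℝ → EuclideanSpace ℝ (Fin 2)}
    (hcont : ContinuousOn γ (Set.Icc 0 1))
    (himg : γ '' Set.Icc 0 1 ⊆ punctSectorE (2 * θ))
    (h0 : γ 0 = myPt r₁ 0)
    (h1 : γ 1 = myPt (r₂ * Real.cos (3 * θ / 2)) (r₂ * Real.sin (3 * θ / 2))) :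
    ENNReal.ofReal (r₁ + r₂) ≤ eVariationOn γ (Set.Icc 0 1) := by
  have hπ := Real.pi_pos
  have hθ0 : 0 < θ := by linarith
  set q : EuclideanSpace ℝ (Fin 2) → ℂ := fun p =>
    ((WithLp.equiv 2 (Fin 2 → ℝ)) p 0 : ℂ) + ((WithLp.equiv 2 (Fin 2 → ℝ)) p 1 : ℂ) * Complex.I
    with hqdef
  have hq : ∀ x y : ℝ, q (myPt x y) = (x:ℂ) + (y:ℂ) * Complex.I := by
    intro x y
    simp [hqdef, myPt]
  set g : ℝ → ℂ := fun t => q (γ t) * Complex.exp (-(θ:ℂ) * Complex.I) with hgdef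
  have hg_form : ∀ (t r φ : ℝ), γ t = myPt (r * Real.cos φ) (r * Real.sin φ) →
      g t = (r:ℂ) * Complex.exp ((↑(φ - θ)) * Complex.I) := by
    intro t r φ hp
    rw [hgdef]
    simp only
    rw [hp, hq, polar_to_exp, mul_assoc, ← Complex.exp_add]
    congr 1
    push_cast
    ring_nf
  have hrep : ∀ t ∈ Set.Icc (0:ℝ) 1, ∃ r φ : ℝ, 0 < r ∧ 0 ≤ φ ∧ φ ≤ 2*θ ∧
      γ t = myPt (r * Real.cos φ) (r * Real.sin φ) := by
    intro t ht
    obtain ⟨r, hr, φ, hφ0, hφ1, hp⟩ := himg ⟨t, ht, rfl⟩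
    exact ⟨r, φ, hr, hφ0, hφ1, hp⟩
  have hslit : ∀ t ∈ Set.Icc (0:ℝ) 1, g t ∈ Complex.slitPlane := by
    intro t ht
    obtain ⟨r, φ, hr, hφ0, hφ1, hp⟩ := hrep t ht
    rw [hg_form t r φ hp]
    exact (exp_arg_slit hr (by linarith) (by linarith)).2
  have hgc : ContinuousOn g (Set.Icc (0:ℝ) 1) := by
    have hx : ContinuousOn (fun t => (WithLp.equiv 2 (Fin 2 → ℝ)) (γ t) 0) (Set.Icc (0:ℝ) 1) :=
      ((continuous_apply (0 : Fin 2)).comp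
        (PiLp.continuous_ofLp 2 (fun _ : Fin 2 => ℝ))).comp_continuousOn hcont
    have hy : ContinuousOn (fun t => (WithLp.equiv 2 (Fin 2 → ℝ)) (γ t) 1) (Set.Icc (0:ℝ) 1) :=
      ((continuous_apply (1 : Fin 2)).comp
        (PiLp.continuous_ofLp 2 (fun _ : Fin 2 => ℝ))).comp_continuousOn hcont
    exact ((Complex.continuous_ofReal.comp_continuousOn hx).add
      ((Complex.continuous_ofReal.comp_continuousOn hy).mul continuousOn_const)).mul
      continuousOn_const
  set h : ℝ → ℝ := fun t => (g t).arg with hhdef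
  have hhc : ContinuousOn h (Set.Icc (0:ℝ) 1) := fun t ht =>
    (Complex.continuousAt_arg (hslit t ht)).comp_continuousWithinAt (hgc t ht)
  have hh0 : h 0 = 0 - θ := by
    have hp0 : γ 0 = myPt (r₁ * Real.cos 0) (r₁ * Real.sin 0) := by
      rw [h0]; norm_num
    rw [hhdef]
    simp only
    rw [hg_form 0 r₁ 0 hp0]
    exact (exp_arg_slit hr₁ (by linarith) (by linarith)).1
  have hh1 : h 1 = 3 * θ / 2 - θ := by
    rw [hhdef]
    simp only
    rw [hg_form 1 r₂ (3 * θ / 2) h1]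
    exact (exp_arg_slit hr₂ (by linarith) (by linarith)).1
  have hmem : (-(θ/4)) ∈ Set.Icc (h 0) (h 1) := by
    rw [hh0, hh1]
    constructor <;> linarith
  obtain ⟨t₀, ht₀, hval⟩ := intermediate_value_Icc (by norm_num : (0:ℝ) ≤ 1) hhc hmem
  obtain ⟨ρ, φ, hρ, hφ0, hφ1, hpt⟩ := hrep t₀ ht₀
  have hargval : h t₀ = φ - θ := by
    rw [hhdef]
    simp only
    rw [hg_form t₀ ρ φ hpt]
    exact (exp_arg_slit hρ (by linarith) (by linarith)).1
  have hφval : φ = 3 * θ / 4 := by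
    rw [hargval] at hval
    linarith
  have hcos : Real.cos φ ≤ 0 := by
    apply Real.cos_nonpos_of_pi_div_two_le_of_le <;> rw [hφval] <;> linarith
  have hcos2 : Real.cos (3 * θ / 2 - φ) ≤ 0 := by
    have heq : 3 * θ / 2 - φ = 3 * θ / 4 := by rw [hφval]; ring
    rw [heq]
    apply Real.cos_nonpos_of_pi_div_two_le_of_le <;> linarith
  have d₁ : r₁ ≤ dist (γ 0) (γ t₀) := by
    rw [h0, hpt, myPt_dist]
    have key : r₁^2 ≤ (r₁ - ρ * Real.cos φ)^2 + (0 - ρ * Real.sin φ)^2 := by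
      nlinarith [Real.sin_sq_add_cos_sq φ, mul_nonneg (mul_nonneg hr₁.le hρ.le)
        (neg_nonneg.2 hcos), sq_nonneg ρ]
    calc r₁ = Real.sqrt (r₁^2) := (Real.sqrt_sq hr₁.le).symm
      _ ≤ _ := Real.sqrt_le_sqrt key
  have d₂ : r₂ ≤ dist (γ t₀) (γ 1) := by
    rw [h1, hpt, myPt_dist]
    have hexp : (ρ * Real.cos φ - r₂ * Real.cos (3 * θ / 2))^2
        + (ρ * Real.sin φ - r₂ * Real.sin (3 * θ / 2))^2
        = ρ^2 + r₂^2 - 2 * ρ * r₂ * Real.cos (3 * θ / 2 - φ) := by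
      rw [Real.cos_sub]
      linear_combination ρ^2 * (Real.sin_sq_add_cos_sq φ)
        + r₂^2 * (Real.sin_sq_add_cos_sq (3 * θ / 2))
    have key : r₂^2 ≤ (ρ * Real.cos φ - r₂ * Real.cos (3 * θ / 2))^2
        + (ρ * Real.sin φ - r₂ * Real.sin (3 * θ / 2))^2 := by
      rw [hexp]
      nlinarith [mul_nonneg (mul_nonneg hρ.le hr₂.le) (neg_nonneg.2 hcos2), sq_nonneg ρ]
    calc r₂ = Real.sqrt (r₂^2) := (Real.sqrt_sq hr₂.le).symm
      _ ≤ _ := Real.sqrt_le_sqrt key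
  have hsplit := evar_split γ ht₀.1 ht₀.2
  have e1 : ENNReal.ofReal r₁ ≤ eVariationOn γ (Set.Icc 0 t₀) := by
    calc ENNReal.ofReal r₁ ≤ ENNReal.ofReal (dist (γ 0) (γ t₀)) := ENNReal.ofReal_le_ofReal d₁
      _ = edist (γ 0) (γ t₀) := (edist_dist _ _).symm
      _ ≤ _ := eVariationOn.edist_le γ (Set.left_mem_Icc.2 ht₀.1) (Set.right_mem_Icc.2 ht₀.1)
  have e2 : ENNReal.ofReal r₂ ≤ eVariationOn γ (Set.Icc t₀ 1) := by
    calc ENNReal.ofReal r₂ ≤ ENNReal.ofReal (dist (γ t₀) (γ 1)) := ENNReal.ofReal_le_ofReal d₂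
      _ = edist (γ t₀) (γ 1) := (edist_dist _ _).symm
      _ ≤ _ := eVariationOn.edist_le γ (Set.left_mem_Icc.2 ht₀.2) (Set.right_mem_Icc.2 ht₀.2)
  rw [hsplit, ENNReal.ofReal_add hr₁.le hr₂.le]
  exact add_le_add e1 e2

lemma myPt_norm (x y : ℝ) : ‖myPt x y‖ = Real.sqrt (x^2 + y^2) := by
  rw [EuclideanSpace.norm_eq]
  simp [myPt, Fin.sum_univ_two, sq_abs]

/-- **The infimum of lengths is `‖a‖ + ‖b‖` and is approached.** For `2π/3 < θ < π`,
`a = (r₁, 0)` and `b = r₂·(cos (3θ/2), sin (3θ/2))` in the punctured double sector `S_{2θ}`,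
for every `ε > 0` there is a continuous curve from `a` to `b` inside `S_{2θ}` of length
`< ‖a‖ + ‖b‖ + ε`; hence the infimum of lengths of such curves equals `‖a‖ + ‖b‖`. -/
theorem length_inf_in_punctured_double_sector {θ r₁ r₂ : ℝ}
    (hθ₁ : 2 * Real.pi / 3 < θ) (hθ₂ : θ < Real.pi) (hr₁ : 0 < r₁) (hr₂ : 0 < r₂)
    (a b : EuclideanSpace ℝ (Fin 2))
    (ha : a = (WithLp.equiv 2 (Fin 2 → ℝ)).symm ![r₁, 0])
    (hb : b = (WithLp.equiv 2 (Fin 2 → ℝ)).symm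
      ![r₂ * Real.cos (3 * θ / 2), r₂ * Real.sin (3 * θ / 2)]) :
    (∀ ε : ℝ, 0 < ε → ∃ γ : ℝ → EuclideanSpace ℝ (Fin 2),
      ContinuousOn γ (Set.Icc 0 1) ∧ γ '' Set.Icc 0 1 ⊆ punctSectorE (2 * θ) ∧
      γ 0 = a ∧ γ 1 = b ∧
      eVariationOn γ (Set.Icc 0 1) < ENNReal.ofReal (‖a‖ + ‖b‖ + ε)) ∧
    sInf {L : ℝ≥0∞ | ∃ γ : ℝ → EuclideanSpace ℝ (Fin 2),
        ContinuousOn γ (Set.Icc 0 1) ∧ γ '' Set.Icc 0 1 ⊆ punctSectorE (2 * θ) ∧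
        γ 0 = a ∧ γ 1 = b ∧ L = eVariationOn γ (Set.Icc 0 1)}
      = ENNReal.ofReal (‖a‖ + ‖b‖) := by
  have hπ := Real.pi_pos
  have hθ0 : 0 < θ := by linarith
  have ha' : a = myPt r₁ 0 := ha
  have hb' : b = myPt (r₂ * Real.cos (3 * θ / 2)) (r₂ * Real.sin (3 * θ / 2)) := hb
  have hna : ‖a‖ = r₁ := by
    rw [ha', myPt_norm]
    rw [show r₁^2 + (0:ℝ)^2 = r₁^2 by ring, Real.sqrt_sq hr₁.le]
  have hnb : ‖b‖ = r₂ := by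
    rw [hb', myPt_norm]
    have : (r₂ * Real.cos (3 * θ / 2))^2 + (r₂ * Real.sin (3 * θ / 2))^2 = r₂^2 := by
      linear_combination r₂^2 * (Real.sin_sq_add_cos_sq (3 * θ / 2))
    rw [this, Real.sqrt_sq hr₂.le]
  have part1 : ∀ ε : ℝ, 0 < ε → ∃ γ : ℝ → EuclideanSpace ℝ (Fin 2),
      ContinuousOn γ (Set.Icc 0 1) ∧ γ '' Set.Icc 0 1 ⊆ punctSectorE (2 * θ) ∧
      γ 0 = a ∧ γ 1 = b ∧
      eVariationOn γ (Set.Icc 0 1) < ENNReal.ofReal (‖a‖ + ‖b‖ + ε) := by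
    intro ε hε
    set δ := min (min r₁ r₂) (ε / (3 * θ)) with hδdef
    have hδ0 : 0 < δ := lt_min (lt_min hr₁ hr₂) (by positivity)
    have hδr₁ : δ ≤ r₁ := (min_le_left _ _).trans (min_le_left _ _)
    have hδr₂ : δ ≤ r₂ := (min_le_left _ _).trans (min_le_right _ _)
    have hδε : δ ≤ ε / (3 * θ) := min_le_right _ _
    refine ⟨myCurve θ r₁ r₂ δ, (myCurve_continuous _ _ _ _).continuousOn, ?_, ?_, ?_, ?_⟩
    · rintro p ⟨t, _, rfl⟩
      exact ⟨myRho r₁ r₂ δ t, myRho_pos hδ0 hδr₁ hδr₂ t, myPhi θ t,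
        (myPhi_mem hθ0.le t).1, (myPhi_mem hθ0.le t).2, rfl⟩
    · rw [myCurve_zero]; exact ha'.symm
    · rw [myCurve_one]; exact hb'.symm
    · have hsplit : eVariationOn (myCurve θ r₁ r₂ δ) (Set.Icc 0 1)
          = eVariationOn (myCurve θ r₁ r₂ δ) (Set.Icc 0 (1/3))
            + (eVariationOn (myCurve θ r₁ r₂ δ) (Set.Icc (1/3) (2/3))
              + eVariationOn (myCurve θ r₁ r₂ δ) (Set.Icc (2/3) 1)) := by
        rw [← evar_split (myCurve θ r₁ r₂ δ) (show (1:ℝ)/3 ≤ 2/3 by norm_num)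
          (show (2:ℝ)/3 ≤ 1 by norm_num)]
        exact evar_split _ (by norm_num) (by norm_num)
      rw [hsplit]
      have hb1 := piece1_var (θ := θ) (r₂ := r₂) hδr₁
      have hb2 := piece2_var (θ := θ) (r₁ := r₁) (r₂ := r₂) hδ0.le hθ0.le
      have hb3 := piece3_var (θ := θ) (r₁ := r₁) hδr₂
      have hm2 : (0:ℝ) ≤ δ * (3 * θ / 2) := mul_nonneg hδ0.le (by linarith)
      calc eVariationOn (myCurve θ r₁ r₂ δ) (Set.Icc 0 (1/3))
            + (eVariationOn (myCurve θ r₁ r₂ δ) (Set.Icc (1/3) (2/3))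
              + eVariationOn (myCurve θ r₁ r₂ δ) (Set.Icc (2/3) 1))
          ≤ ENNReal.ofReal (r₁ - δ)
            + (ENNReal.ofReal (δ * (3 * θ / 2)) + ENNReal.ofReal (r₂ - δ)) :=
            add_le_add hb1 (add_le_add hb2 hb3)
        _ = ENNReal.ofReal ((r₁ - δ) + (δ * (3 * θ / 2) + (r₂ - δ))) := by
            rw [ENNReal.ofReal_add (by linarith) (by linarith),
              ENNReal.ofReal_add (by linarith) (by linarith)]
        _ < ENNReal.ofReal (‖a‖ + ‖b‖ + ε) := by
            rw [hna, hnb]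
            rw [ENNReal.ofReal_lt_ofReal_iff (by positivity)]
            have h3θ : δ * (3 * θ) ≤ ε := (le_div_iff₀ (by positivity)).1 hδε
            have heq : δ * (3 * θ / 2) = δ * (3 * θ) / 2 := by ring
            linarith
  refine ⟨part1, ?_⟩
  apply le_antisymm
  · apply ENNReal.le_of_forall_pos_le_add
    intro ε hε _
    obtain ⟨γ, hc, him, hg0, hg1, hlt⟩ := part1 ε (by exact_mod_cast hε)
    calc sInf {L : ℝ≥0∞ | ∃ γ : ℝ → EuclideanSpace ℝ (Fin 2),
            ContinuousOn γ (Set.Icc 0 1) ∧ γ '' Set.Icc 0 1 ⊆ punctSectorE (2 * θ) ∧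
            γ 0 = a ∧ γ 1 = b ∧ L = eVariationOn γ (Set.Icc 0 1)}
          ≤ eVariationOn γ (Set.Icc 0 1) := sInf_le ⟨γ, hc, him, hg0, hg1, rfl⟩
      _ ≤ ENNReal.ofReal (‖a‖ + ‖b‖ + ε) := hlt.le
      _ = ENNReal.ofReal (‖a‖ + ‖b‖) + ENNReal.ofReal ε :=
          ENNReal.ofReal_add (by rw [hna, hnb]; positivity) (by positivity)
      _ = ENNReal.ofReal (‖a‖ + ‖b‖) + ε := by rw [ENNReal.ofReal_coe_nnreal]
  · apply le_sInf
    rintro L ⟨γ, hc, him, hg0, hg1, rfl⟩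
    rw [hna, hnb]
    exact sector_lower_bound hθ₁ hθ₂ hr₁ hr₂ hc him (hg0.trans ha') (hg1.trans hb')
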